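/- One-step refinement of pa-intervals via forward stepping: if [b,e] is the pa-interval for P[1..j-1] at column j, and b̃ (resp. ẽ) are the minimal and maximal indices in [b,e] with PBWT_j[·] = P[j] (assuming they exist), then the pa-interval for P[1..j] at column j+1 equals [fore[b̃][j], fore[ẽ][j]]. -/

import Mathlib

namespace PBWT

/-- The reversed prefix of length `j` (truncated at `w`) of haplotype `i`:
used to express the co-lexicographic order of prefixes. -/
def revPrefix {h w : ℕ} (S : Fin h → Fin w → ℕ) (j : ℕ) (i : Fin h) : List ℕ :=
  ((List.range j).filterMap (fun t => if ht : t < w then some (S i ⟨t, ht⟩) else none)).reverse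

/-- `PA` is the stable sort of the haplotype indices by the co-lexicographic
order of their prefixes of length `j` (ties broken by original index). -/
def IsStableSort {h w : ℕ} (S : Fin h → Fin w → ℕ) (j : ℕ) (PA : Fin h ≃ Fin h) : Prop :=
  ∀ a b : Fin h, a < b →
    List.Lex (· < ·) (revPrefix S j (PA a)) (revPrefix S j (PA b)) ∨
      (revPrefix S j (PA a) = revPrefix S j (PA b) ∧ (PA a).val < (PA b).val)

/-- Number of maximal runs of equal adjacent values in the sequence `f`. -/
def runCount {α : Type*} [DecidableEq α] {n : ℕ} (f : Fin n → α) : ℕ :=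
  ((List.ofFn f).destutter (· ≠ ·)).length

/-- `h''`: the number of indices `i` with `S i ≠ S (i+1)`. -/
noncomputable def adjDiff {h w : ℕ} (S : Fin h → Fin w → ℕ) : ℕ :=
  Nat.card {i : Fin h // ∃ h1 : (i : ℕ) + 1 < h, S i ≠ S ⟨(i : ℕ) + 1, h1⟩}

/-- Haplotype `k` matches the pattern `P` on its first `t` positions. -/
def Matches {h w : ℕ} (S : Fin h → Fin w → ℕ) (P : ℕ → ℕ) (t : ℕ) (k : Fin h) : Prop :=
  ∀ s : ℕ, ∀ hs : s < w, s < t → S k ⟨s, hs⟩ = P s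

lemma revPrefix_zero {h w : ℕ} (S : Fin h → Fin w → ℕ) (i : Fin h) :
    revPrefix S 0 i = [] := by simp [revPrefix]

lemma revPrefix_succ {h w : ℕ} (S : Fin h → Fin w → ℕ) {m : ℕ} (hm : m < w) (i : Fin h) :
    revPrefix S (m + 1) i = S i ⟨m, hm⟩ :: revPrefix S m i := by
  unfold revPrefix
  rw [List.range_succ, List.filterMap_append, List.reverse_append]
  simp [hm]

lemma revPrefix_eq_iff {h w : ℕ} (S : Fin h → Fin w → ℕ) {m : ℕ} (hm : m ≤ w)
    (k k' : Fin h) :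
    revPrefix S m k = revPrefix S m k' ↔
      ∀ t (ht : t < w), t < m → S k ⟨t, ht⟩ = S k' ⟨t, ht⟩ := by
  induction m with
  | zero => simp [revPrefix_zero]
  | succ m ih =>
    have hmw : m < w := lt_of_lt_of_le (Nat.lt_succ_self m) hm
    rw [revPrefix_succ S hmw, revPrefix_succ S hmw, List.cons.injEq,
      ih (le_of_lt hmw)]
    constructor
    · rintro ⟨h1, h2⟩ t ht htm
      rcases Nat.lt_succ_iff_lt_or_eq.mp htm with hlt | rfl
      · exact h2 t ht hlt
      · exact h1
    · intro hall
      exact ⟨hall m hmw (Nat.lt_succ_self m),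
        fun t ht hlt => hall t ht (Nat.lt_succ_of_lt hlt)⟩

lemma matches_revPrefix_eq {h w : ℕ} (S : Fin h → Fin w → ℕ) (P : ℕ → ℕ) {m : ℕ}
    (hm : m ≤ w) {k k' : Fin h} (h1 : Matches S P m k) (h2 : Matches S P m k') :
    revPrefix S m k = revPrefix S m k' := by
  rw [revPrefix_eq_iff S hm]
  intro t ht htm
  rw [h1 t ht htm, h2 t ht htm]

lemma matches_of_revPrefix_eq {h w : ℕ} (S : Fin h → Fin w → ℕ) (P : ℕ → ℕ) {m : ℕ}
    (hm : m ≤ w) {k k' : Fin h} (heq : revPrefix S m k = revPrefix S m k')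
    (h2 : Matches S P m k') : Matches S P m k := by
  intro s hs hsm
  rw [(revPrefix_eq_iff S hm k k').mp heq s hs hsm]
  exact h2 s hs hsm

theorem stmt19 (h w : ℕ) (S : Fin h → Fin w → ℕ) (P : ℕ → ℕ) (j : ℕ) (hj : j < w)
    (PA1 PA2 : Fin h ≃ Fin h)
    (hPA1 : IsStableSort S j PA1) (hPA2 : IsStableSort S (j + 1) PA2)
    (b e : Fin h)
    (hpa : ∀ i : Fin h, (b ≤ i ∧ i ≤ e) ↔ Matches S P j (PA1 i))
    (bt et : Fin h)
    (hbt : b ≤ bt ∧ bt ≤ e ∧ S (PA1 bt) ⟨j, hj⟩ = P j ∧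
      ∀ t : Fin h, b ≤ t → t < bt → S (PA1 t) ⟨j, hj⟩ ≠ P j)
    (het : b ≤ et ∧ et ≤ e ∧ S (PA1 et) ⟨j, hj⟩ = P j ∧
      ∀ t : Fin h, et < t → t ≤ e → S (PA1 t) ⟨j, hj⟩ ≠ P j) :
    ∀ i : Fin h, (PA2.symm (PA1 bt) ≤ i ∧ i ≤ PA2.symm (PA1 et)) ↔
      Matches S P (j + 1) (PA2 i) := by
  have hjw : j + 1 ≤ w := hj
  obtain ⟨hbb, hbe, hbP, hbmin⟩ := hbt
  obtain ⟨heb, hee, heP, hemax⟩ := het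
  -- Matches j+1 at PA1 bt and PA1 et
  have ext : ∀ t : Fin h, Matches S P j (PA1 t) → S (PA1 t) ⟨j, hj⟩ = P j →
      Matches S P (j + 1) (PA1 t) := by
    intro t hM hS s hs hsj
    rcases Nat.lt_succ_iff_lt_or_eq.mp hsj with hlt | rfl
    · exact hM s hs hlt
    · exact hS
  have hMbt : Matches S P (j + 1) (PA1 bt) :=
    ext bt ((hpa bt).mp ⟨hbb, hbe⟩) hbP
  have hMet : Matches S P (j + 1) (PA1 et) :=
    ext et ((hpa et).mp ⟨heb, hee⟩) heP
  -- irreflexivity of lex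
  have nolex : ∀ l : List ℕ, ¬ List.Lex (· < ·) l l := fun l => irrefl_of _ l
  -- every haplotype matching P on j+1 positions has index between PA1 bt and PA1 et
  have order : ∀ k : Fin h, Matches S P (j + 1) k →
      (PA1 bt).val ≤ k.val ∧ k.val ≤ (PA1 et).val := by
    intro k hk
    set t := PA1.symm k with ht
    have hkt : PA1 t = k := PA1.apply_symm_apply k
    have hMj : Matches S P j (PA1 t) := by
      rw [hkt]; exact fun s hs hsj => hk s hs (Nat.lt_succ_of_lt hsj)
    have hbt' : b ≤ t ∧ t ≤ e := (hpa t).mpr hMj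
    have hSt : S (PA1 t) ⟨j, hj⟩ = P j := by
      rw [hkt]; exact hk j hj (Nat.lt_succ_self j)
    have h1 : bt ≤ t := by
      by_contra hcon
      exact hbmin t hbt'.1 (lt_of_not_ge hcon) hSt
    have h2 : t ≤ et := by
      by_contra hcon
      exact hemax t (lt_of_not_ge hcon) hbt'.2 hSt
    have hrbt : revPrefix S j (PA1 bt) = revPrefix S j (PA1 t) :=
      matches_revPrefix_eq S P (le_of_lt hj) ((hpa bt).mp ⟨hbb, hbe⟩) hMj
    have hret : revPrefix S j (PA1 t) = revPrefix S j (PA1 et) :=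
      matches_revPrefix_eq S P (le_of_lt hj) hMj ((hpa et).mp ⟨heb, hee⟩)
    constructor
    · rcases lt_or_eq_of_le h1 with hlt | rfl
      · rcases hPA1 bt t hlt with hlex | ⟨_, hvl⟩
        · rw [hrbt] at hlex; exact absurd hlex (nolex _)
        · rw [hkt] at hvl; exact le_of_lt hvl
      · rw [hkt]
    · rcases lt_or_eq_of_le h2 with hlt | rfl
      · rcases hPA1 t et hlt with hlex | ⟨_, hvl⟩
        · rw [hret] at hlex; exact absurd hlex (nolex _)
        · rw [hkt] at hvl; exact le_of_lt hvl
      · rw [hkt]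
  intro i
  set a := PA2.symm (PA1 bt) with ha
  set c := PA2.symm (PA1 et) with hc
  have hPa : PA2 a = PA1 bt := PA2.apply_symm_apply _
  have hPc : PA2 c = PA1 et := PA2.apply_symm_apply _
  have hMa : Matches S P (j + 1) (PA2 a) := by rw [hPa]; exact hMbt
  have hMc : Matches S P (j + 1) (PA2 c) := by rw [hPc]; exact hMet
  have hrac : revPrefix S (j + 1) (PA2 a) = revPrefix S (j + 1) (PA2 c) :=
    matches_revPrefix_eq S P hjw hMa hMc
  constructor
  · rintro ⟨hai, hic⟩
    rcases eq_or_lt_of_le hai with rfl | hai'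
    · exact hMa
    rcases eq_or_lt_of_le hic with rfl | hic'
    · exact hMc
    -- a < i < c
    have s1 := hPA2 a i hai'
    have s2 := hPA2 i c hic'
    have hria : revPrefix S (j + 1) (PA2 i) = revPrefix S (j + 1) (PA2 a) := by
      rcases s1 with hlex1 | ⟨heq1, _⟩
      · rcases s2 with hlex2 | ⟨heq2, _⟩
        · exact absurd (List.lex_trans (r := fun x y : ℕ => x < y) (fun h₁ h₂ => Nat.lt_trans h₁ h₂) hlex1 (hrac ▸ hlex2)) (nolex _)
        · rw [heq2, ← hrac] at hlex1; exact absurd hlex1 (nolex _)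
      · exact heq1.symm
    exact matches_of_revPrefix_eq S P hjw hria hMa
  · intro hMi
    have hord := order (PA2 i) hMi
    have hria : revPrefix S (j + 1) (PA2 i) = revPrefix S (j + 1) (PA2 a) :=
      matches_revPrefix_eq S P hjw hMi hMa
    have hric : revPrefix S (j + 1) (PA2 i) = revPrefix S (j + 1) (PA2 c) :=
      matches_revPrefix_eq S P hjw hMi hMc
    constructor
    · by_contra hcon
      have hlt : i < a := lt_of_not_ge hcon
      rcases hPA2 i a hlt with hlex | ⟨_, hvl⟩
      · rw [hria] at hlex; exact absurd hlex (nolex _)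
      · rw [hPa] at hvl; exact absurd hvl (not_lt_of_ge hord.1)
    · by_contra hcon
      have hlt : c < i := lt_of_not_ge hcon
      rcases hPA2 c i hlt with hlex | ⟨_, hvl⟩
      · rw [hric] at hlex; exact absurd hlex (nolex _)
      · rw [hPc] at hvl; exact absurd hvl (not_lt_of_ge hord.2)

end PBWT
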